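/- Let n and k be integers with 1 < k < n. Then the vector σ ∈ ℤⁿ whose coordinates are σ_i = 4(n−k) for 1 ≤ i ≤ k−1, σ_k = 2n−4k+1, σ_i = −(4k−2) for k+1 ≤ i ≤ n−1, and σ_n = −(2k−1), is not a changemaker. -/

import Mathlib

/-- A vector is a changemaker if, after taking absolute values of its entries and
sorting them in increasing order as `t_1 ≤ ⋯ ≤ t_m`, one has
`t_i ≤ 1 + ∑_{j<i} t_j` for all `i`. -/
def IsChangemaker {m : ℕ} (σ : Fin m → ℤ) : Prop :=
  let l := (Finset.univ.val.map fun i => |σ i|).sort (· ≤ ·)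
  ∀ i : Fin l.length, l.get i ≤ 1 + ((l.take (i : ℕ)).sum)

/-- For `1 < k < n`, the complementary vector
`σ = (4(n−k), …, 4(n−k), 2n−4k+1, −(4k−2), …, −(4k−2), −(2k−1))`
(coordinates indexed `1, …, n`) is not a changemaker. -/
theorem sigma_not_changemaker (n k : ℕ) (h1 : 1 < k) (h2 : k < n) :
    ¬ IsChangemaker (fun i : Fin n =>
      if (i : ℕ) + 1 < k then 4 * ((n : ℤ) - k)
      else if (i : ℕ) + 1 = k then 2 * (n : ℤ) - 4 * k + 1
      else if (i : ℕ) + 1 < n then -(4 * (k : ℤ) - 2)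
      else -(2 * (k : ℤ) - 1)) := by
  intro h
  simp only [IsChangemaker] at h
  set σ : Fin n → ℤ := fun i : Fin n =>
      if (i : ℕ) + 1 < k then 4 * ((n : ℤ) - k)
      else if (i : ℕ) + 1 = k then 2 * (n : ℤ) - 4 * k + 1
      else if (i : ℕ) + 1 < n then -(4 * (k : ℤ) - 2)
      else -(2 * (k : ℤ) - 1) with hσ
  set M : Multiset ℤ := Finset.univ.val.map (fun i => |σ i|) with hM
  set l : List ℤ := M.sort (· ≤ ·) with hl
  have hlen : l.length = n := by
    rw [hl, Multiset.length_sort, Multiset.card_map]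
    simp
  have hsorted : l.Pairwise (· ≤ ·) := Multiset.pairwise_sort _ _
  have hcoe : (l : Multiset ℤ) = M := Multiset.sort_eq _ _
  have hbound : ∀ i : Fin n, 1 ≤ |σ i| ∧ (|σ i| ≤ 2 → (i : ℕ) + 1 = k ∧ |σ i| = 1) := by
    intro i
    simp only [hσ]
    split_ifs with hc1 hc2 hc3 <;>
      rcases abs_cases (G := ℤ) _ with ⟨he, hs⟩ | ⟨he, hs⟩ <;> rw [he] <;> omega
  -- l has at least two elements
  have hn3 : 3 ≤ n := by omega
  obtain ⟨a, t0, ht0⟩ := List.exists_cons_of_ne_nil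
    (l := l) (by intro hnil; rw [hnil] at hlen; simp at hlen; omega)
  obtain ⟨b, t, ht1⟩ := List.exists_cons_of_ne_nil
    (l := t0) (by intro hnil; rw [hnil] at ht0; rw [ht0] at hlen; simp at hlen; omega)
  have hl2 : l = a :: b :: t := by rw [ht0, ht1]
  rw [hl2] at h hcoe
  have h0 : a ≤ 1 := by have := h ⟨0, by simp⟩; simpa using this
  have h1' : b ≤ 1 + a := by have := h ⟨1, by simp⟩; simpa using this
  have hmem : ∀ x ∈ M, ∃ i : Fin n, |σ i| = x := by
    intro x hx
    rw [hM, Multiset.mem_map] at hx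
    obtain ⟨i, _, hi⟩ := hx
    exact ⟨i, hi⟩
  obtain ⟨ia, hia⟩ := hmem a (by rw [← hcoe]; simp)
  obtain ⟨ib, hib⟩ := hmem b (by rw [← hcoe]; simp)
  have ha1 : a = 1 := le_antisymm h0 (hia ▸ (hbound ia).1)
  have hka : (ia : ℕ) + 1 = k := ((hbound ia).2 (by rw [hia, ha1]; norm_num)).1
  have hb2 : b ≤ 2 := by omega
  have hkb : (ib : ℕ) + 1 = k ∧ |σ ib| = 1 := (hbound ib).2 (by rw [hib]; exact hb2)
  have hb1 : b = 1 := by rw [← hib]; exact hkb.2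
  -- counting: 1 appears at least twice in M, but only index k-1 can give it
  have hcount2 : 2 ≤ Multiset.count 1 M := by
    rw [← hcoe, ha1, hb1]
    simp [Multiset.count_cons]
  have hcount1 : Multiset.count 1 M ≤ 1 := by
    rw [hM, Multiset.count_map]
    have hsub : Multiset.filter (fun i => (1 : ℤ) = |σ i|) Finset.univ.val
        = (Finset.univ.filter (fun i => (1 : ℤ) = |σ i|)).val := rfl
    rw [hsub]
    have : (Finset.univ.filter (fun i : Fin n => (1 : ℤ) = |σ i|)).card ≤ 1 := by
      apply Finset.card_le_one.mpr
      intro x hx y hy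
      simp only [Finset.mem_filter] at hx hy
      have hxk := ((hbound x).2 (by omega)).1
      have hyk := ((hbound y).2 (by omega)).1
      exact Fin.ext (by omega)
    exact this
  omega
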